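/- arXiv:2202.13382 — 3 statements merged into one kernel-verified Lean document; each statement's English description precedes it below -/
import Mathlib

section
/- Let u : ℝ^n × [0,T] → ℝ be bounded and upper semicontinuous and v : ℝ^n × [0,T] → ℝ be bounded and lower semicontinuous, and suppose there exists δ > 0 with sup_{(x,t) ∈ ℝ^n × [0,T)} (u(x,t) − v(x,t)) − δ > M_b, where M_b := sup_{x ∈ ℝ^n} max(u(x,0) − v(x,0), 0). Then there exist η > 0, β₀ > 0 and ρ₀ > 0 such that for every α > 0, every β ∈ (0,β₀) and every ρ ∈ (0,ρ₀): sup_{(x,y,t) ∈ ℝ^n × ℝ^n × [0,T)} M_{α,ρ,β}(x,y,t) > η. -/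
open scoped RealInnerProductSpace Matrix
open Set

noncomputable section

abbrev Evec (n : ℕ) := EuclideanSpace ℝ (Fin n)

/-- The quadratic form `v ↦ vᵀ X v` associated to an `n × n` real matrix. -/
def quadForm {n : ℕ} (X : Matrix (Fin n) (Fin n) ℝ) (v : Evec n) : ℝ :=
  ∑ i, ∑ j, v i * X i j * v j

/-- Frobenius norm of a real matrix. -/
def frobNorm {n m : ℕ} (A : Matrix (Fin n) (Fin m) ℝ) : ℝ :=
  Real.sqrt (∑ i, ∑ j, (A i j) ^ 2)

/-- The operator `L(M, p, x) = (1/2) Tr(σ(x) σ(x)ᵀ M) + b(x) · p`. -/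
def opL {n m : ℕ} (b : Evec n → Evec n) (σ : Evec n → Matrix (Fin n) (Fin m) ℝ)
    (X : Matrix (Fin n) (Fin n) ℝ) (p x : Evec n) : ℝ :=
  (1 / 2) * Matrix.trace (σ x * (σ x)ᵀ * X) + ⟪b x, p⟫

/-- `(a, p, X)` belongs to the parabolic superjet `P^{2,+} w (x,t)` relative to the
domain `U × (0,T)`. -/
def InSuperJet {n : ℕ} (T : ℝ) (U : Set (Evec n)) (w : Evec n → ℝ → ℝ)
    (x : Evec n) (t a : ℝ) (p : Evec n) (X : Matrix (Fin n) (Fin n) ℝ) : Prop :=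
  ∀ η > (0 : ℝ), ∃ δ > (0 : ℝ), ∀ y ∈ U, ∀ s ∈ Set.Ioo (0 : ℝ) T,
    ‖y - x‖ + |s - t| < δ →
    w y s ≤ w x t + a * (s - t) + ⟪p, y - x⟫ + (1 / 2) * quadForm X (y - x)
      + η * (|s - t| + ‖y - x‖ ^ 2)

/-- `(a, p, X)` belongs to the parabolic subjet `P^{2,-} w (x,t) = -P^{2,+}(-w)(x,t)`. -/
def InSubJet {n : ℕ} (T : ℝ) (U : Set (Evec n)) (w : Evec n → ℝ → ℝ)
    (x : Evec n) (t a : ℝ) (p : Evec n) (X : Matrix (Fin n) (Fin n) ℝ) : Prop :=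
  InSuperJet T U (fun y s => -(w y s)) x t (-a) (-p) (-X)

/-- Jet inequality of a viscosity subsolution of `∂_t u - L(D²u, Du, x) = 0` on `U × (0,T)`. -/
def SubsolutionPropOn {n m : ℕ} (b : Evec n → Evec n) (σ : Evec n → Matrix (Fin n) (Fin m) ℝ)
    (T : ℝ) (U : Set (Evec n)) (u : Evec n → ℝ → ℝ) : Prop :=
  ∀ x ∈ U, ∀ t ∈ Set.Ioo (0 : ℝ) T, ∀ (a : ℝ) (p : Evec n) (X : Matrix (Fin n) (Fin n) ℝ),
    X.IsSymm → InSuperJet T U u x t a p X → a - opL b σ X p x ≤ 0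

/-- Jet inequality of a viscosity supersolution of `∂_t u - L(D²u, Du, x) = 0` on `U × (0,T)`. -/
def SupersolutionPropOn {n m : ℕ} (b : Evec n → Evec n) (σ : Evec n → Matrix (Fin n) (Fin m) ℝ)
    (T : ℝ) (U : Set (Evec n)) (u : Evec n → ℝ → ℝ) : Prop :=
  ∀ x ∈ U, ∀ t ∈ Set.Ioo (0 : ℝ) T, ∀ (a : ℝ) (p : Evec n) (X : Matrix (Fin n) (Fin n) ℝ),
    X.IsSymm → InSubJet T U u x t a p X → 0 ≤ a - opL b σ X p x

/-- The set `L_{b,σ}` of points around which `(b, σ)` is locally Lipschitz. -/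
def Lset {n m : ℕ} (b : Evec n → Evec n) (σ : Evec n → Matrix (Fin n) (Fin m) ℝ) :
    Set (Evec n) :=
  {x | ∃ U ∈ nhds x, ∃ K ≥ (0 : ℝ), ∀ y ∈ U, ∀ z ∈ U,
    ‖b y - b z‖ + frobNorm (σ y - σ z) ≤ K * ‖y - z‖}

/-- The complement `NL_{b,σ}` of `L_{b,σ}`. -/
def NLset {n m : ℕ} (b : Evec n → Evec n) (σ : Evec n → Matrix (Fin n) (Fin m) ℝ) :
    Set (Evec n) :=
  (Lset b σ)ᶜ

/-- Assumption Z on the coefficients `b`, `σ`. -/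
structure AssumptionZ {n m : ℕ} (b : Evec n → Evec n) (σ : Evec n → Matrix (Fin n) (Fin m) ℝ)
    (Cb Cσ α β : ℝ) : Prop where
  hCb : 0 < Cb
  hCσ : 0 < Cσ
  hα : α ∈ Set.Ioc (0 : ℝ) 1
  hβ : β ∈ Set.Ioc (0 : ℝ) 1
  hb_bdd : ∃ C, ∀ x, ‖b x‖ ≤ C
  hσ_bdd : ∃ C, ∀ x, frobNorm (σ x) ≤ C
  hb_hold : ∀ x y, ‖b x - b y‖ ≤ Cb * ‖x - y‖ ^ α
  hσ_hold : ∀ x y, frobNorm (σ x - σ y) ≤ Cσ * ‖x - y‖ ^ β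
  hNL : ∀ x ∈ NLset b σ, b x = 0 ∧ σ x = 0 ∧ ∃ r > (0 : ℝ),
    ∀ y ∈ Metric.ball x r ∩ Lset b σ, ∀ v : Evec n,
      Cσ⁻¹ * ‖x - y‖ ^ (2 * β) * ‖v‖ ^ 2 ≤ quadForm (σ y * (σ y)ᵀ) v ∧
      quadForm (σ y * (σ y)ᵀ) v ≤ Cσ * ‖x - y‖ ^ (2 * β) * ‖v‖ ^ 2
  hexp : 1 + α - 2 * β > 0
  hβ_half : β > 1 / 2

/-- Assumption P on the approximating coefficients `bε`, `σε`. -/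
structure AssumptionP {n m : ℕ} (b : Evec n → Evec n) (σ : Evec n → Matrix (Fin n) (Fin m) ℝ)
    (bε : ℝ → Evec n → Evec n) (σε : ℝ → Evec n → Matrix (Fin n) (Fin m) ℝ) : Prop where
  hb_cont : Continuous b
  hσ_cont : ∀ i j, Continuous fun x => σ x i j
  hb_bdd : ∃ C, ∀ x, ‖b x‖ ≤ C
  hσ_bdd : ∃ C, ∀ x, frobNorm (σ x) ≤ C
  hbε_cont : ∀ ε > (0 : ℝ), Continuous (bε ε)
  hσε_cont : ∀ ε > (0 : ℝ), ∀ i j, Continuous fun x => σε ε x i j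
  hbε_bdd : ∀ ε > (0 : ℝ), ∃ C, ∀ x, ‖bε ε x‖ ≤ C
  hσε_bdd : ∀ ε > (0 : ℝ), ∃ C, ∀ x, frobNorm (σε ε x) ≤ C
  hposdef : ∀ ε > (0 : ℝ), ∀ x, (σε ε x * (σε ε x)ᵀ).PosDef
  hconv_b : ∀ K : Set (Evec n), IsCompact K → ∀ η > (0 : ℝ), ∃ ε₀ > (0 : ℝ),
    ∀ ε, 0 < ε → ε < ε₀ → ∀ x ∈ K, ‖bε ε x - b x‖ < η
  hconv_σ : ∀ K : Set (Evec n), IsCompact K → ∀ η > (0 : ℝ), ∃ ε₀ > (0 : ℝ),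
    ∀ ε, 0 < ε → ε < ε₀ → ∀ x ∈ K, frobNorm (σε ε x - σ x) < η

/-- The upper relaxed half-limit `u*` of a family `(u^ε)_{ε>0}` on `ℝ^n × [0,T)`. -/
def relaxSup {n : ℕ} (T : ℝ) (u : ℝ → Evec n → ℝ → ℝ) (x : Evec n) (t : ℝ) : ℝ :=
  ⨅ δ : {d : ℝ // 0 < d}, sSup {r : ℝ | ∃ ε, 0 < ε ∧ ε < δ.1 ∧ ∃ y : Evec n, ∃ s : ℝ,
    0 ≤ s ∧ s < T ∧ ‖x - y‖ + |t - s| < δ.1 ∧ u ε y s = r}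

/-- The lower relaxed half-limit `u_*` of a family `(u^ε)_{ε>0}` on `ℝ^n × [0,T)`. -/
def relaxInf {n : ℕ} (T : ℝ) (u : ℝ → Evec n → ℝ → ℝ) (x : Evec n) (t : ℝ) : ℝ :=
  ⨆ δ : {d : ℝ // 0 < d}, sInf {r : ℝ | ∃ ε, 0 < ε ∧ ε < δ.1 ∧ ∃ y : Evec n, ∃ s : ℝ,
    0 ≤ s ∧ s < T ∧ ‖x - y‖ + |t - s| < δ.1 ∧ u ε y s = r}


/-- The auxiliary function `M_{α,ρ,β}(x,y,t) = u(x,t) - ρ/(T-t) - v(y,t) - α‖x-y‖² - β‖x‖²`. -/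
def Maux {n : ℕ} (T α ρ β : ℝ) (u v : Evec n → ℝ → ℝ) (x y : Evec n) (t : ℝ) : ℝ :=
  u x t - ρ / (T - t) - v y t - α * ‖x - y‖ ^ 2 - β * ‖x‖ ^ 2

/-- `M_b = sup_x max(u(x,0) - v(x,0), 0)`. -/
def MbVal {n : ℕ} (u v : Evec n → ℝ → ℝ) : ℝ :=
  ⨆ x : Evec n, max (u x 0 - v x 0) 0

/-- the supremum of the auxiliary function is bounded away from zero,
for small `β`, `ρ`, uniformly in `α`. -/
theorem aux_function_sup_positive {n : ℕ} (T : ℝ) (hT : 0 < T)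
    (u v : Evec n → ℝ → ℝ)
    (hu_bdd : ∃ C, ∀ x t, 0 ≤ t → t ≤ T → |u x t| ≤ C)
    (hv_bdd : ∃ C, ∀ x t, 0 ≤ t → t ≤ T → |v x t| ≤ C)
    (hu_usc : UpperSemicontinuousOn (Function.uncurry u) (Set.univ ×ˢ Set.Icc 0 T))
    (hv_lsc : LowerSemicontinuousOn (Function.uncurry v) (Set.univ ×ˢ Set.Icc 0 T))
    (hδ : ∃ δ > (0 : ℝ),
      sSup {r : ℝ | ∃ (x : Evec n) (t : ℝ), 0 ≤ t ∧ t < T ∧ r = u x t - v x t} - δ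
        > MbVal u v) :
    ∃ η > (0 : ℝ), ∃ β₀ > (0 : ℝ), ∃ ρ₀ > (0 : ℝ), ∀ α > (0 : ℝ),
      ∀ β : ℝ, 0 < β → β < β₀ → ∀ ρ : ℝ, 0 < ρ → ρ < ρ₀ →
        sSup {r : ℝ | ∃ (x y : Evec n) (t : ℝ), 0 ≤ t ∧ t < T ∧
          r = Maux T α ρ β u v x y t} > η := by
  obtain ⟨Cu, hCu⟩ := hu_bdd
  obtain ⟨Cv, hCv⟩ := hv_bdd
  obtain ⟨δ, hδpos, hgap⟩ := hδ
  set S : Set ℝ := {r : ℝ | ∃ (x : Evec n) (t : ℝ), 0 ≤ t ∧ t < T ∧ r = u x t - v x t}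
  have hSne : S.Nonempty := ⟨u 0 0 - v 0 0, 0, 0, le_refl _, hT, rfl⟩
  have hSbdd : BddAbove S := by
    refine ⟨Cu + Cv, fun r hr => ?_⟩
    obtain ⟨x, t, ht0, htT, rfl⟩ := hr
    have h1 := hCu x t ht0 htT.le
    have h2 := hCv x t ht0 htT.le
    have := abs_le.mp h1
    have := abs_le.mp h2
    linarith [(abs_le.mp h1).2, (abs_le.mp h2).1]
  have hMb : (0 : ℝ) ≤ MbVal u v :=
    Real.iSup_nonneg fun x => le_max_right _ _
  -- near-maximizer
  obtain ⟨A, hAS, hAgt⟩ := exists_lt_of_lt_csSup hSne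
    (show sSup S - δ / 2 < sSup S from sub_lt_self _ (half_pos hδpos))
  obtain ⟨x₀, t₀, ht0, htT, hAeq⟩ := hAS
  have hApos : δ / 2 < A := by linarith
  have hTt : 0 < T - t₀ := by linarith
  have hA0 : 0 < A := lt_trans (half_pos hδpos) hApos
  refine ⟨A / 2, by linarith, A / 8 / (‖x₀‖ ^ 2 + 1),
    div_pos (by linarith) (by positivity),
    A / 8 * (T - t₀), mul_pos (by linarith) hTt, fun α hα β hβ hβlt ρ hρ hρlt => ?_⟩
  have hmem : Maux T α ρ β u v x₀ x₀ t₀ ∈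
      {r : ℝ | ∃ (x y : Evec n) (t : ℝ), 0 ≤ t ∧ t < T ∧ r = Maux T α ρ β u v x y t} :=
    ⟨x₀, x₀, t₀, ht0, htT, rfl⟩
  have hbdd : BddAbove {r : ℝ | ∃ (x y : Evec n) (t : ℝ), 0 ≤ t ∧ t < T ∧
      r = Maux T α ρ β u v x y t} := by
    refine ⟨Cu + Cv, fun r hr => ?_⟩
    obtain ⟨x, y, t, ht0', htT', rfl⟩ := hr
    have h1 := (abs_le.mp (hCu x t ht0' htT'.le)).2
    have h2 := (abs_le.mp (hCv y t ht0' htT'.le)).1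
    have hq1 : 0 ≤ ρ / (T - t) := div_nonneg hρ.le (by linarith)
    have hq2 : 0 ≤ α * ‖x - y‖ ^ 2 := by positivity
    have hq3 : 0 ≤ β * ‖x‖ ^ 2 := by positivity
    unfold Maux; linarith
  have hle := le_csSup hbdd hmem
  have hval : A / 2 < Maux T α ρ β u v x₀ x₀ t₀ := by
    have h1 : ρ / (T - t₀) < A / 8 := by
      rw [div_lt_iff₀ hTt]
      calc ρ < A / 8 * (T - t₀) := hρlt
        _ = A / 8 * (T - t₀) := rfl
    have h2 : β * ‖x₀‖ ^ 2 < A / 8 := by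
      have hx1 : (0 : ℝ) < ‖x₀‖ ^ 2 + 1 := by positivity
      have : β * ‖x₀‖ ^ 2 < A / 8 / (‖x₀‖ ^ 2 + 1) * (‖x₀‖ ^ 2 + 1) := by
        have hb2 : β * (‖x₀‖ ^ 2 + 1) < A / 8 / (‖x₀‖ ^ 2 + 1) * (‖x₀‖ ^ 2 + 1) :=
          (mul_lt_mul_of_pos_right hβlt hx1)
        nlinarith [sq_nonneg ‖x₀‖]
      rwa [div_mul_cancel₀] at this
      positivity
    have hxx : ‖x₀ - x₀‖ ^ 2 = 0 := by simp
    unfold Maux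
    rw [hxx]
    have := hAeq
    nlinarith
  linarith

end
end

section
/- Let u : ℝ^n × [0,T] → ℝ be bounded and upper semicontinuous and v : ℝ^n × [0,T] → ℝ be bounded and lower semicontinuous, and suppose there exists δ > 0 with sup_{(x,t) ∈ ℝ^n × [0,T)} (u(x,t) − v(x,t)) − δ > M_b, where M_b := sup_{x ∈ ℝ^n} max(u(x,0) − v(x,0), 0). For each α, β, ρ > 0 let (x̂(α,β,ρ), ŷ(α,β,ρ), t̂(α,β,ρ)) be any maximizer of M_{α,ρ,β} over ℝ^n × ℝ^n × [0,T). Then lim_{α→∞} limsup_{(β,ρ)→(0,0)} α·‖x̂(α,β,ρ) − ŷ(α,β,ρ)‖² = 0. -/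
open scoped RealInnerProductSpace Matrix
open Set

noncomputable section

open Filter in
/-- for maximizers `(x̂,ŷ,t̂)` of the auxiliary function,
`α‖x̂-ŷ‖² → 0` in the iterated limit `(β,ρ) → (0,0)` then `α → ∞`. -/
theorem aux_maximizer_distance_limit {n : ℕ} (T : ℝ) (hT : 0 < T)
    (u v : Evec n → ℝ → ℝ)
    (hu_bdd : ∃ C, ∀ x t, 0 ≤ t → t ≤ T → |u x t| ≤ C)
    (hv_bdd : ∃ C, ∀ x t, 0 ≤ t → t ≤ T → |v x t| ≤ C)
    (hu_usc : UpperSemicontinuousOn (Function.uncurry u) (Set.univ ×ˢ Set.Icc 0 T))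
    (hv_lsc : LowerSemicontinuousOn (Function.uncurry v) (Set.univ ×ˢ Set.Icc 0 T))
    (hδ : ∃ δ > (0 : ℝ),
      sSup {r : ℝ | ∃ (x : Evec n) (t : ℝ), 0 ≤ t ∧ t < T ∧ r = u x t - v x t} - δ
        > MbVal u v)
    (xh yh : ℝ → ℝ → ℝ → Evec n) (th : ℝ → ℝ → ℝ → ℝ)
    (hmax : ∀ α > (0 : ℝ), ∀ β > (0 : ℝ), ∀ ρ > (0 : ℝ),
      (0 ≤ th α β ρ ∧ th α β ρ < T) ∧
      ∀ (x y : Evec n) (t : ℝ), 0 ≤ t → t < T →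
        Maux T α ρ β u v x y t ≤ Maux T α ρ β u v (xh α β ρ) (yh α β ρ) (th α β ρ)) :
    Tendsto
      (fun α : ℝ =>
        Filter.limsup
          (fun q : ℝ × ℝ => α * ‖xh α q.1 q.2 - yh α q.1 q.2‖ ^ 2)
          ((nhdsWithin 0 (Set.Ioi 0)) ×ˢ (nhdsWithin 0 (Set.Ioi 0))))
      atTop (nhds 0) := by
  classical
  obtain ⟨Cu, hCu⟩ := hu_bdd
  obtain ⟨Cv, hCv⟩ := hv_bdd
  set C : ℝ := Cu + Cv with hCdef
  set Mv : ℝ → ℝ → ℝ → ℝ := fun α β ρ =>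
    Maux T α ρ β u v (xh α β ρ) (yh α β ρ) (th α β ρ) with hMvdef
  -- Upper bound on the maximal value
  have hMub : ∀ α, 0 < α → ∀ β, 0 < β → ∀ ρ, 0 < ρ → Mv α β ρ ≤ C := by
    intro α hα β hβ ρ hρ
    obtain ⟨⟨ht0, htT⟩, -⟩ := hmax α hα β hβ ρ hρ
    have h1 : u (xh α β ρ) (th α β ρ) ≤ Cu := (abs_le.1 (hCu _ _ ht0 htT.le)).2
    have h2 : -Cv ≤ v (yh α β ρ) (th α β ρ) := (abs_le.1 (hCv _ _ ht0 htT.le)).1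
    have h3 : 0 ≤ ρ / (T - th α β ρ) := div_nonneg hρ.le (by linarith)
    have h4 : 0 ≤ α * ‖xh α β ρ - yh α β ρ‖ ^ 2 := by positivity
    have h5 : 0 ≤ β * ‖xh α β ρ‖ ^ 2 := by positivity
    simp only [hMvdef, Maux, hCdef]
    linarith
  -- Lower bound on the maximal value
  have hMlb : ∀ α, 0 < α → ∀ β, 0 < β → ∀ ρ, 0 < ρ → -C - ρ / T ≤ Mv α β ρ := by
    intro α hα β hβ ρ hρ
    obtain ⟨-, hle⟩ := hmax α hα β hβ ρ hρ
    have h := hle 0 0 0 le_rfl hT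
    have h1 : -Cu ≤ u 0 0 := (abs_le.1 (hCu _ _ le_rfl hT.le)).1
    have h2 : v 0 0 ≤ Cv := (abs_le.1 (hCv _ _ le_rfl hT.le)).2
    simp only [Maux, sub_zero, sub_self, norm_zero] at h
    simp only [hMvdef, Maux, hCdef]
    nlinarith [h]
  -- Key inequality combining monotonicity in all parameters
  have hkey : ∀ α' α β' β ρ' ρ : ℝ, 0 < α' → α' ≤ α → 0 < β' → β' ≤ β →
      0 < ρ' → ρ' ≤ ρ →
      Mv α β ρ + (α - α') * ‖xh α β ρ - yh α β ρ‖ ^ 2 ≤ Mv α' β' ρ' := by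
    intro α' α β' β ρ' ρ hα' hαα hβ' hββ hρ' hρρ
    have hα : 0 < α := lt_of_lt_of_le hα' hαα
    have hβ : 0 < β := lt_of_lt_of_le hβ' hββ
    have hρ : 0 < ρ := lt_of_lt_of_le hρ' hρρ
    obtain ⟨⟨ht0, htT⟩, -⟩ := hmax α hα β hβ ρ hρ
    have hTt : 0 < T - th α β ρ := by linarith
    have h2 := (hmax α' hα' β' hβ' ρ' hρ').2 (xh α β ρ) (yh α β ρ) (th α β ρ) ht0 htT
    have hρdiv : ρ' / (T - th α β ρ) ≤ ρ / (T - th α β ρ) := by gcongr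
    have hβx : β' * ‖xh α β ρ‖ ^ 2 ≤ β * ‖xh α β ρ‖ ^ 2 :=
      mul_le_mul_of_nonneg_right hββ (sq_nonneg _)
    simp only [hMvdef, Maux]
    simp only [Maux] at h2
    linarith
  -- The sup over β, ρ > 0
  set S : ℝ → Set ℝ := fun α => {r | ∃ β, 0 < β ∧ ∃ ρ, 0 < ρ ∧ r = Mv α β ρ}
    with hSdef
  have hSne : ∀ α, (S α).Nonempty := fun α => ⟨Mv α 1 1, 1, one_pos, 1, one_pos, rfl⟩
  have hSbdd : ∀ α, 0 < α → BddAbove (S α) := by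
    intro α hα
    refine ⟨C, ?_⟩
    rintro r ⟨β, hβ, ρ, hρ, rfl⟩
    exact hMub α hα β hβ ρ hρ
  set N : ℝ → ℝ := fun α => sSup (S α) with hNdef
  have hNub : ∀ α, 0 < α → N α ≤ C := by
    intro α hα
    simp only [hNdef]
    refine csSup_le (hSne α) ?_
    rintro r ⟨β, hβ, ρ, hρ, rfl⟩
    exact hMub α hα β hβ ρ hρ
  have hNlb : ∀ α, 0 < α → -C - 1 ≤ N α := by
    intro α hα
    have hmem : Mv α 1 (T / 2) ∈ S α := ⟨1, one_pos, T / 2, half_pos hT, rfl⟩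
    have h1 := hMlb α hα 1 one_pos (T / 2) (half_pos hT)
    have h2 : (T / 2) / T ≤ 1 := by
      rw [div_le_one hT]; linarith
    have h3 : Mv α 1 (T / 2) ≤ N α := by
      simp only [hNdef]; exact le_csSup (hSbdd α hα) hmem
    linarith
  have hNanti : ∀ a b : ℝ, 0 < a → a ≤ b → N b ≤ N a := by
    intro a b ha hab
    simp only [hNdef]
    refine csSup_le (hSne b) ?_
    rintro r ⟨β, hβ, ρ, hρ, rfl⟩
    have h1 : Mv b β ρ ≤ Mv a β ρ := by
      have hk := hkey a b β β ρ ρ ha hab hβ le_rfl hρ le_rfl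
      nlinarith [sq_nonneg ‖xh b β ρ - yh b β ρ‖]
    exact h1.trans (le_csSup (hSbdd a ha) ⟨β, hβ, ρ, hρ, rfl⟩)
  -- Monotone convergence of N at infinity
  set N' : ℝ → ℝ := fun α => N (max α 1) with hN'def
  have hone : ∀ a : ℝ, (0:ℝ) < max a 1 := fun a => lt_of_lt_of_le one_pos (le_max_right _ _)
  have hN'anti : Antitone N' := by
    intro a b hab
    exact hNanti (max a 1) (max b 1) (hone a) (max_le_max hab le_rfl)
  have hN'bdd : BddBelow (Set.range N') := by
    refine ⟨-C - 1, ?_⟩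
    rintro _ ⟨a, rfl⟩
    exact hNlb _ (hone a)
  have hN'tend : Tendsto N' atTop (nhds (⨅ a, N' a)) := tendsto_atTop_ciInf hN'anti hN'bdd
  have hhalf : Tendsto (fun α : ℝ => N' (α / 2)) atTop (nhds (⨅ a, N' a)) :=
    hN'tend.comp (tendsto_id.atTop_div_const two_pos)
  have hdiff : Tendsto (fun α : ℝ => 2 * (N' (α / 2) - N' α)) atTop (nhds 0) := by
    have h := (hhalf.sub hN'tend).const_mul (2 : ℝ)
    simpa using h
  -- The product filter
  set F : Filter (ℝ × ℝ) := (nhdsWithin 0 (Set.Ioi 0)) ×ˢ (nhdsWithin 0 (Set.Ioi 0))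
    with hFdef
  haveI hFne : F.NeBot := by
    rw [hFdef]
    exact Filter.prod_neBot.2 ⟨nhdsGT_neBot 0, nhdsGT_neBot 0⟩
  have hsmall : ∀ c : ℝ, 0 < c → {x : ℝ | 0 < x ∧ x < c} ∈ nhdsWithin (0:ℝ) (Set.Ioi 0) := by
    intro c hc
    have h1 : Set.Ioi (0:ℝ) ∈ nhdsWithin (0:ℝ) (Set.Ioi 0) := self_mem_nhdsWithin
    have h2 : Set.Iio c ∈ nhdsWithin (0:ℝ) (Set.Ioi 0) :=
      nhdsWithin_le_nhds (Iio_mem_nhds hc)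
    filter_upwards [h1, h2] with x hx1 hx2
    exact ⟨hx1, hx2⟩
  have hprodmem : ∀ c₁ c₂ : ℝ, 0 < c₁ → 0 < c₂ →
      ∀ᶠ q : ℝ × ℝ in F, (0 < q.1 ∧ q.1 < c₁) ∧ (0 < q.2 ∧ q.2 < c₂) := by
    intro c₁ c₂ hc₁ hc₂
    rw [hFdef]
    exact Filter.prod_mem_prod (hsmall c₁ hc₁) (hsmall c₂ hc₂)
  -- boundedness of the limsup-ed function
  have hboundF : ∀ α : ℝ, 0 < α →
      F.IsBoundedUnder (· ≤ ·) (fun q : ℝ × ℝ => α * ‖xh α q.1 q.2 - yh α q.1 q.2‖ ^ 2) := by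
    intro α hα
    have hev : ∀ᶠ q : ℝ × ℝ in F,
        α * ‖xh α q.1 q.2 - yh α q.1 q.2‖ ^ 2 ≤ 2 * (C + (C + 1)) := by
      filter_upwards [hprodmem 1 T one_pos hT] with q hq
      obtain ⟨⟨hβ, -⟩, ⟨hρ, hρT⟩⟩ := hq
      have hk := hkey (α / 2) α q.1 q.1 q.2 q.2 (half_pos hα) (by linarith) hβ le_rfl hρ le_rfl
      have hub := hMub (α / 2) (half_pos hα) q.1 hβ q.2 hρ
      have hlb := hMlb α hα q.1 hβ q.2 hρ
      have hρdiv : q.2 / T ≤ 1 := by rw [div_le_one hT]; linarith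
      nlinarith [hk, hub, hlb]
    exact ⟨2 * (C + (C + 1)), Filter.eventually_map.2 hev⟩
  -- lower bound on the limsup
  have key_lb : ∀ α : ℝ, 0 < α →
      (0:ℝ) ≤ Filter.limsup (fun q : ℝ × ℝ => α * ‖xh α q.1 q.2 - yh α q.1 q.2‖ ^ 2) F := by
    intro α hα
    refine le_limsup_of_frequently_le ?_ (hboundF α hα)
    exact (Filter.Eventually.of_forall (fun q => by positivity)).frequently
  -- upper bound on the limsup
  have key_ub : ∀ α : ℝ, 0 < α →
      Filter.limsup (fun q : ℝ × ℝ => α * ‖xh α q.1 q.2 - yh α q.1 q.2‖ ^ 2) F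
        ≤ 2 * (N (α / 2) - N α) := by
    intro α hα
    have hα2 : 0 < α / 2 := half_pos hα
    have hcob : F.IsCoboundedUnder (· ≤ ·)
        (fun q : ℝ × ℝ => α * ‖xh α q.1 q.2 - yh α q.1 q.2‖ ^ 2) :=
      Filter.isCoboundedUnder_le_of_le F (fun q => by positivity)
    have haux : ∀ ε : ℝ, 0 < ε →
        Filter.limsup (fun q : ℝ × ℝ => α * ‖xh α q.1 q.2 - yh α q.1 q.2‖ ^ 2) F
          ≤ 2 * (N (α / 2) - N α) + 2 * ε := by
      intro ε hε
      have hlt : N α - ε < sSup (S α) := by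
        have : N α = sSup (S α) := by simp only [hNdef]
        rw [← this]; linarith
      obtain ⟨r, hrS, hr⟩ := exists_lt_of_lt_csSup (hSne α) hlt
      obtain ⟨β₀, hβ₀, ρ₀, hρ₀, rfl⟩ := hrS
      refine Filter.limsup_le_of_le hcob ?_
      filter_upwards [hprodmem β₀ ρ₀ hβ₀ hρ₀] with q hq
      obtain ⟨⟨hβ, hββ₀⟩, ⟨hρ, hρρ₀⟩⟩ := hq
      -- key inequality at α/2
      have hk := hkey (α / 2) α q.1 q.1 q.2 q.2 hα2 (by linarith) hβ le_rfl hρ le_rfl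
      -- Mv (α/2) q ≤ N (α/2)
      have hup : Mv (α / 2) q.1 q.2 ≤ N (α / 2) := by
        simp only [hNdef]
        exact le_csSup (hSbdd (α / 2) hα2) ⟨q.1, hβ, q.2, hρ, rfl⟩
      -- Mv α β₀ ρ₀ ≤ Mv α q
      have hdn : Mv α β₀ ρ₀ ≤ Mv α q.1 q.2 := by
        have hk2 := hkey α α q.1 β₀ q.2 ρ₀ hα le_rfl hβ hββ₀.le hρ hρρ₀.le
        nlinarith [sq_nonneg ‖xh α β₀ ρ₀ - yh α β₀ ρ₀‖]
      nlinarith [hk, hup, hdn, hr]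
    by_contra hcon
    push_neg at hcon
    have h := haux ((Filter.limsup (fun q : ℝ × ℝ =>
      α * ‖xh α q.1 q.2 - yh α q.1 q.2‖ ^ 2) F - 2 * (N (α / 2) - N α)) / 4) (by linarith)
    linarith
  -- Conclusion by squeezing
  refine tendsto_of_tendsto_of_tendsto_of_le_of_le' tendsto_const_nhds hdiff ?_ ?_
  · filter_upwards [Filter.eventually_gt_atTop (0:ℝ)] with α hα
    exact key_lb α hα
  · filter_upwards [Filter.eventually_ge_atTop (2:ℝ)] with α hα
    have hα0 : 0 < α := by linarith
    have e1 : N' (α / 2) = N (α / 2) := by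
      simp only [hN'def]
      rw [max_eq_left (by linarith)]
    have e2 : N' α = N α := by
      simp only [hN'def]
      rw [max_eq_left (by linarith)]
    rw [e1, e2]
    exact key_ub α hα0


end
end

section
/- Let u : ℝ^n × [0,T] → ℝ be bounded and upper semicontinuous, let v : ℝ^n × [0,T] → ℝ be bounded and lower semicontinuous with v(·,0) uniformly continuous on ℝ^n, and suppose there exists δ > 0 with sup_{(x,t) ∈ ℝ^n × [0,T)} (u(x,t) − v(x,t)) − δ > M_b, where M_b := sup_{x ∈ ℝ^n} max(u(x,0) − v(x,0), 0). Then there exist α₀, β₀, ρ₀ > 0 such that for every α > α₀, every β ∈ (0,β₀) and every ρ ∈ (0,ρ₀): sup_{(x,y,t) ∈ ℝ^n × ℝ^n × [0,T)} M_{α,ρ,β}(x,y,t) > M_b. -/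
open scoped RealInnerProductSpace Matrix
open Set

noncomputable section

/-- when `v(·,0)` is uniformly continuous, the supremum of the auxiliary
function exceeds `M_b` for large `α` and small `β`, `ρ`. -/
theorem aux_function_sup_exceeds_boundary {n : ℕ} (T : ℝ) (hT : 0 < T)
    (u v : Evec n → ℝ → ℝ)
    (hu_bdd : ∃ C, ∀ x t, 0 ≤ t → t ≤ T → |u x t| ≤ C)
    (hv_bdd : ∃ C, ∀ x t, 0 ≤ t → t ≤ T → |v x t| ≤ C)
    (hu_usc : UpperSemicontinuousOn (Function.uncurry u) (Set.univ ×ˢ Set.Icc 0 T))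
    (hv_lsc : LowerSemicontinuousOn (Function.uncurry v) (Set.univ ×ˢ Set.Icc 0 T))
    (hv0_uc : UniformContinuous (fun x => v x 0))
    (hδ : ∃ δ > (0 : ℝ),
      sSup {r : ℝ | ∃ (x : Evec n) (t : ℝ), 0 ≤ t ∧ t < T ∧ r = u x t - v x t} - δ
        > MbVal u v) :
    ∃ α₀ > (0 : ℝ), ∃ β₀ > (0 : ℝ), ∃ ρ₀ > (0 : ℝ), ∀ α > α₀,
      ∀ β : ℝ, 0 < β → β < β₀ → ∀ ρ : ℝ, 0 < ρ → ρ < ρ₀ →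
        sSup {r : ℝ | ∃ (x y : Evec n) (t : ℝ), 0 ≤ t ∧ t < T ∧
          r = Maux T α ρ β u v x y t} > MbVal u v := by
  obtain ⟨Cu, hCu⟩ := hu_bdd
  obtain ⟨Cv, hCv⟩ := hv_bdd
  obtain ⟨δ, hδ0, hδ'⟩ := hδ
  set S := {r : ℝ | ∃ (x : Evec n) (t : ℝ), 0 ≤ t ∧ t < T ∧ r = u x t - v x t} with hS
  have hSne : S.Nonempty := ⟨u 0 0 - v 0 0, 0, 0, le_refl 0, hT, rfl⟩
  have hlt : sSup S - δ / 4 < sSup S := by linarith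
  obtain ⟨r, ⟨xb, tb, ht0, htT, hr⟩, hrgt⟩ := exists_lt_of_lt_csSup hSne hlt
  have hTt : 0 < T - tb := by linarith
  refine ⟨1, one_pos, δ / (4 * (‖xb‖ ^ 2 + 1)), ?_, δ / 4 * (T - tb), ?_, ?_⟩
  · exact div_pos hδ0 (by positivity)
  · exact mul_pos (by linarith) hTt
  intro α hα β hβ0 hβ ρ hρ0 hρ
  have h1 : ρ / (T - tb) < δ / 4 := by
    rw [div_lt_iff₀ hTt]; nlinarith
  have h2 : β * ‖xb‖ ^ 2 < δ / 4 := by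
    have h3 : (0 : ℝ) < ‖xb‖ ^ 2 + 1 := by positivity
    have h4 := (lt_div_iff₀ (by positivity : (0:ℝ) < 4 * (‖xb‖ ^ 2 + 1))).mp hβ
    nlinarith [sq_nonneg ‖xb‖]
  have hmem : Maux T α ρ β u v xb xb tb ∈ {r : ℝ | ∃ (x y : Evec n) (t : ℝ), 0 ≤ t ∧ t < T ∧
      r = Maux T α ρ β u v x y t} := ⟨xb, xb, tb, ht0, htT, rfl⟩
  have hval : Maux T α ρ β u v xb xb tb > MbVal u v := by
    have huv : u xb tb - v xb tb > sSup S - δ / 4 := by rw [← hr]; exact hrgt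
    unfold Maux
    simp only [sub_self, norm_zero]
    nlinarith [hδ']
  have hbdd : BddAbove {r : ℝ | ∃ (x y : Evec n) (t : ℝ), 0 ≤ t ∧ t < T ∧
      r = Maux T α ρ β u v x y t} := by
    refine ⟨Cu + Cv, ?_⟩
    rintro r ⟨x, y, t, ht0', htT', rfl⟩
    have hut := abs_le.1 (hCu x t ht0' htT'.le)
    have hvt := abs_le.1 (hCv y t ht0' htT'.le)
    have hTt' : 0 < T - t := by linarith
    have hρpos : 0 ≤ ρ / (T - t) := by positivity
    unfold Maux
    nlinarith [sq_nonneg ‖x - y‖, sq_nonneg ‖x‖]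
  exact lt_of_lt_of_le hval (le_csSup hbdd hmem)

end
end
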